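/- Let X be a real Hilbert space and F : X → X* Lipschitz continuous with constant L_F > 0 and strongly monotone with constant ν > 0. Assume: (N1) for each u ∈ X there is a linear map F'(u) : X → X* which is the Gâteaux derivative of F at u (for all u, v, w ∈ X the function t ↦ ⟨F(u+tv), w⟩ is differentiable with derivative at t = 0 equal to ⟨F'(u)v, w⟩), with ⟨F'(u)v, w⟩ = ⟨F'(u)w, v⟩, ⟨F'(u)v, v⟩ ≥ α_{F'}‖v‖_X², and ⟨F'(u)v, w⟩ ≤ β_{F'}‖v‖_X‖w‖_X for all u, v, w ∈ X, with constants α_{F'}, β_{F'} > 0 independent of u; (N2) there is a functional G : X → ℝ whose Gâteaux derivative is G'(u) = F'(u)u, and u ↦ F'(u)u is continuous from X to X* with respect to the weak topology on X* (for each w ∈ X, u ↦ ⟨F'(u)u, w⟩ is continuous); (N3) there is a functional H : X → ℝ whose Gâteaux derivative is H' = F; (N4) δ : X → [δ_min, δ_max] is a continuous functional with constants 0 < δ_min ≤ δ_max < 2α_{F'}/L_F. If {uⁿ}ₙ₌₀^∞ ⊆ X is the damped Newton iteration, i.e. ⟨F'(uⁿ)uⁿ⁺¹, v⟩ = ⟨F'(uⁿ)uⁿ,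 v⟩ − δ(uⁿ)⟨F(uⁿ), v⟩ for all v ∈ X and n ≥ 0, then {uⁿ} converges in norm to the unique element u* ∈ X satisfying ⟨F(u*), v⟩ = 0 for all v ∈ X. -/

import Mathlib

open Filter intervalIntegral

section aux
variable {X : Type*} [NormedAddCommGroup X] [NormedSpace ℝ X]

lemma dn_lipCont (F : X → X →L[ℝ] ℝ) (L : ℝ)
    (hlip : ∀ u v w : X, |F u w - F v w| ≤ L * ‖u - v‖ * ‖w‖) (v : X) :
    Continuous fun x : X => F x v := by
  have h : LipschitzWith (Real.toNNReal (L * ‖v‖)) (fun x : X => F x v) := by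
    apply LipschitzWith.of_dist_le_mul
    intro x y
    rw [Real.dist_eq, dist_eq_norm]
    have h1 := hlip x y v
    have h2 : L * ‖v‖ ≤ (Real.toNNReal (L * ‖v‖) : ℝ) := Real.le_coe_toNNReal _
    nlinarith [norm_nonneg (x - y), abs_nonneg (F x v - F y v)]
  exact h.continuous

lemma dn_ftc (F : X → X →L[ℝ] ℝ) (L : ℝ)
    (hlip : ∀ u v w : X, |F u w - F v w| ≤ L * ‖u - v‖ * ‖w‖)
    (H : X → ℝ)
    (hH' : ∀ u v : X, ∀ t : ℝ,
      HasDerivAt (fun s : ℝ => H (u + s • v)) (F (u + t • v) v) t)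
    (w v : X) :
    H (w + v) - H w = ∫ t in (0:ℝ)..1, F (w + t • v) v := by
  have hc : Continuous fun t : ℝ => F (w + t • v) v :=
    (dn_lipCont F L hlip v).comp (by continuity)
  have := intervalIntegral.integral_eq_sub_of_hasDerivAt
    (f := fun s : ℝ => H (w + s • v)) (f' := fun t : ℝ => F (w + t • v) v)
    (fun t _ => hH' w v t) (hc.intervalIntegrable 0 1)
  rw [this]
  simp

end aux
set_option maxHeartbeats 1000000 in
theorem damped_newton_convergence
    {X : Type*} [NormedAddCommGroup X] [InnerProductSpace ℝ X] [CompleteSpace X]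
    (F : X → X →L[ℝ] ℝ) (L ν : ℝ) (hL : 0 < L) (hν : 0 < ν)
    (hlip : ∀ u v w : X, |F u w - F v w| ≤ L * ‖u - v‖ * ‖w‖)
    (hmono : ∀ u v : X, ν * ‖u - v‖ ^ 2 ≤ F u (u - v) - F v (u - v))
    -- (N1)
    (F' : X → X →L[ℝ] X →L[ℝ] ℝ)
    (hF'deriv : ∀ u v w : X,
      HasDerivAt (fun t : ℝ => F (u + t • v) w) (F' u v w) 0)
    (hF'symm : ∀ u v w : X, F' u v w = F' u w v)
    (αF' βF' : ℝ) (hαF' : 0 < αF') (hβF' : 0 < βF')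
    (hF'coer : ∀ u v : X, αF' * ‖v‖ ^ 2 ≤ F' u v v)
    (hF'bdd : ∀ u v w : X, F' u v w ≤ βF' * ‖v‖ * ‖w‖)
    -- (N2)
    (G : X → ℝ)
    (hG' : ∀ u v : X, ∀ t : ℝ,
      HasDerivAt (fun s : ℝ => G (u + s • v)) (F' (u + t • v) (u + t • v) v) t)
    (hG'cont : ∀ w : X, Continuous fun u => F' u u w)
    -- (N3)
    (H : X → ℝ)
    (hH' : ∀ u v : X, ∀ t : ℝ,
      HasDerivAt (fun s : ℝ => H (u + s • v)) (F (u + t • v) v) t)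
    -- (N4)
    (δ : X → ℝ) (δmin δmax : ℝ) (hδmin : 0 < δmin) (hδle : δmin ≤ δmax)
    (hδmax : δmax < 2 * αF' / L)
    (hδrange : ∀ u : X, δ u ∈ Set.Icc δmin δmax) (hδcont : Continuous δ)
    (u : ℕ → X)
    (hiter : ∀ n : ℕ, ∀ v : X,
      F' (u n) (u (n + 1)) v = F' (u n) (u n) v - δ (u n) * F (u n) v) :
    ∃ ustar : X, Filter.Tendsto u Filter.atTop (nhds ustar) ∧
      (∀ v : X, F ustar v = 0) ∧
      (∀ w : X, (∀ v : X, F w v = 0) → w = ustar) := by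
  have hδmax0 : 0 < δmax := lt_of_lt_of_le hδmin hδle
  set e : ℕ → X := fun n => u (n + 1) - u n with he
  set K : ℝ := βF' / δmin with hK
  have hK0 : 0 < K := div_pos hβF' hδmin
  set c : ℝ := αF' / δmax - L / 2 with hc
  have hc0 : 0 < c := by
    rw [hc]
    have h1 : δmax * L < 2 * αF' := (lt_div_iff₀ hL).mp hδmax
    have : L / 2 < αF' / δmax := (div_lt_div_iff₀ (by norm_num) hδmax0).mpr (by nlinarith)
    linarith
  -- key identity from the iteration
  have hKey : ∀ n v, δ (u n) * F (u n) v = -(F' (u n) (e n) v) := by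
    intro n v
    have h := hiter n v
    have h2 : F' (u n) (e n) v = F' (u n) (u (n + 1)) v - F' (u n) (u n) v := by
      simp [he, map_sub]
    linarith
  -- pointwise bound on the residual
  have habs : ∀ n v, |F' (u n) (e n) v| ≤ βF' * ‖e n‖ * ‖v‖ := by
    intro n v
    rw [abs_le]
    refine ⟨?_, hF'bdd _ _ _⟩
    have h := hF'bdd (u n) (-(e n)) v
    simp only [map_neg, ContinuousLinearMap.neg_apply, norm_neg] at h
    linarith
  have hFbound : ∀ n v, |F (u n) v| ≤ K * ‖e n‖ * ‖v‖ := by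
    intro n v
    have hδn := hδrange (u n)
    have hδnpos : 0 < δ (u n) := lt_of_lt_of_le hδmin hδn.1
    have h1 : δ (u n) * |F (u n) v| ≤ βF' * ‖e n‖ * ‖v‖ := by
      rw [← abs_of_pos hδnpos, ← abs_mul, hKey n v, abs_neg]
      exact habs n v
    rw [hK]
    rw [div_mul_eq_mul_div, div_mul_eq_mul_div, le_div_iff₀ hδmin]
    have h2 : δmin * |F (u n) v| ≤ δ (u n) * |F (u n) v| :=
      mul_le_mul_of_nonneg_right hδn.1 (abs_nonneg _)
    nlinarith
  -- descent of H
  have hdesc : ∀ n, H (u (n + 1)) - H (u n) ≤ -c * ‖e n‖ ^ 2 := by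
    intro n
    have hFTC : H (u (n + 1)) - H (u n) = ∫ t in (0:ℝ)..1, F (u n + t • e n) (e n) := by
      have := dn_ftc F L hlip H hH' (u n) (e n)
      simpa [he] using this
    have hδn := hδrange (u n)
    have hδnpos : 0 < δ (u n) := lt_of_lt_of_le hδmin hδn.1
    have hFe : F (u n) (e n) ≤ -(αF' / δmax) * ‖e n‖ ^ 2 := by
      have h1 : δ (u n) * F (u n) (e n) ≤ -(αF' * ‖e n‖ ^ 2) := by
        rw [hKey n (e n)]; linarith [hF'coer (u n) (e n)]
      have hnn : 0 ≤ αF' * ‖e n‖ ^ 2 := by positivity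
      have hF0 : F (u n) (e n) ≤ 0 := by nlinarith
      have h2 : αF' / δmax * ‖e n‖ ^ 2 ≤ -(F (u n) (e n)) := by
        rw [div_mul_eq_mul_div, div_le_iff₀ hδmax0]
        have h3 : δmax * F (u n) (e n) ≤ δ (u n) * F (u n) (e n) :=
          mul_le_mul_of_nonpos_right hδn.2 hF0
        linarith
      linarith
    have hic : Continuous fun t : ℝ => F (u n + t • e n) (e n) :=
      (dn_lipCont F L hlip (e n)).comp (continuous_const.add (continuous_id.smul continuous_const))
    have hbound : ∀ t ∈ Set.Icc (0:ℝ) 1,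
        F (u n + t • e n) (e n) ≤ F (u n) (e n) + L * t * ‖e n‖ ^ 2 := by
      intro t ht
      have h := hlip (u n + t • e n) (u n) (e n)
      have : ‖u n + t • e n - u n‖ = t * ‖e n‖ := by
        rw [add_sub_cancel_left, norm_smul, Real.norm_eq_abs, abs_of_nonneg ht.1]
      rw [this] at h
      have := (abs_le.mp h).2
      nlinarith
    have hInt : (∫ t in (0:ℝ)..1, F (u n + t • e n) (e n)) ≤
        ∫ t in (0:ℝ)..1, (F (u n) (e n) + L * t * ‖e n‖ ^ 2) := by
      apply intervalIntegral.integral_mono_on (by norm_num)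
        (hic.intervalIntegrable 0 1) ((continuous_const.add ((continuous_const.mul continuous_id).mul continuous_const)).intervalIntegrable 0 1)
      exact hbound
    have hval : (∫ t in (0:ℝ)..1, (F (u n) (e n) + L * t * ‖e n‖ ^ 2)) =
        F (u n) (e n) + L / 2 * ‖e n‖ ^ 2 := by
      have h0 : (fun t : ℝ => F (u n) (e n) + L * t * ‖e n‖ ^ 2)
          = fun t : ℝ => F (u n) (e n) + t * (L * ‖e n‖ ^ 2) := by funext t; ring
      show (∫ t in (0:ℝ)..1, (F (u n) (e n) + L * t * ‖e n‖ ^ 2)) = _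
      rw [show (fun t : ℝ => F (u n) (e n) + L * t * ‖e n‖ ^ 2)
          = fun t : ℝ => F (u n) (e n) + t * (L * ‖e n‖ ^ 2) from h0,
        intervalIntegral.integral_add (continuous_const.intervalIntegrable 0 1)
          ((show Continuous fun t : ℝ => t * (L * ‖e n‖ ^ 2) from continuous_id'.mul continuous_const).intervalIntegrable 0 1),
        intervalIntegral.integral_mul_const, integral_id, integral_const]
      norm_num
      ring
    rw [hFTC]
    rw [hval] at hInt
    calc (∫ t in (0:ℝ)..1, F (u n + t • e n) (e n))
        ≤ F (u n) (e n) + L / 2 * ‖e n‖ ^ 2 := hInt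
      _ ≤ -(αF' / δmax) * ‖e n‖ ^ 2 + L / 2 * ‖e n‖ ^ 2 := by linarith [hFe]
      _ = -c * ‖e n‖ ^ 2 := by rw [hc]; ring
  -- lower bound for H
  have hlow : ∀ w : X, H 0 + F 0 w + ν / 2 * ‖w‖ ^ 2 ≤ H w := by
    intro w
    have hFTC : H w - H 0 = ∫ t in (0:ℝ)..1, F (t • w) w := by
      have := dn_ftc F L hlip H hH' 0 w
      simpa using this
    have hic : Continuous fun t : ℝ => F (t • w) w :=
      (dn_lipCont F L hlip w).comp (continuous_id.smul continuous_const)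
    have hbound : ∀ t ∈ Set.Icc (0:ℝ) 1,
        F 0 w + ν * t * ‖w‖ ^ 2 ≤ F (t • w) w := by
      intro t ht
      rcases eq_or_lt_of_le ht.1 with h0 | h0
      · simp [← h0]
      · have h := hmono (t • w) 0
        simp only [sub_zero] at h
        have hn : ‖t • w‖ ^ 2 = t ^ 2 * ‖w‖ ^ 2 := by
          rw [norm_smul, Real.norm_eq_abs, mul_pow, sq_abs]
        have hs : ∀ x : X, F x (t • w) = t * F x w := by
          intro x; rw [map_smul]; simp
        rw [hn, hs, hs] at h
        have h2 : t * (ν * t * ‖w‖ ^ 2) ≤ t * (F (t • w) w - F 0 w) := by nlinarith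
        have := le_of_mul_le_mul_left h2 h0
        linarith
    have hInt : (∫ t in (0:ℝ)..1, (F 0 w + ν * t * ‖w‖ ^ 2)) ≤
        ∫ t in (0:ℝ)..1, F (t • w) w := by
      apply intervalIntegral.integral_mono_on (by norm_num)
        ((continuous_const.add ((continuous_const.mul continuous_id).mul continuous_const)).intervalIntegrable 0 1) (hic.intervalIntegrable 0 1)
      exact hbound
    have hval : (∫ t in (0:ℝ)..1, (F 0 w + ν * t * ‖w‖ ^ 2)) =
        F 0 w + ν / 2 * ‖w‖ ^ 2 := by
      rw [show (fun t : ℝ => F 0 w + ν * t * ‖w‖ ^ 2)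
          = fun t : ℝ => F 0 w + t * (ν * ‖w‖ ^ 2) from by funext t; ring,
        intervalIntegral.integral_add (continuous_const.intervalIntegrable 0 1)
          ((show Continuous fun t : ℝ => t * (ν * ‖w‖ ^ 2) from continuous_id'.mul continuous_const).intervalIntegrable 0 1),
        intervalIntegral.integral_mul_const, integral_id, integral_const]
      norm_num
      ring
    rw [hval] at hInt
    linarith [hFTC ▸ hInt]
  have hlow2 : ∀ n, H 0 - ‖F 0‖ ^ 2 / (2 * ν) ≤ H (u n) := by
    intro n
    have h1 := hlow (u n)
    have h2 : -(‖F 0‖ * ‖u n‖) ≤ F 0 (u n) := by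
      have h := (F 0).le_opNorm (u n)
      rw [Real.norm_eq_abs] at h
      linarith [neg_abs_le (F 0 (u n))]
    have h3 : ‖F 0‖ * ‖u n‖ - ν / 2 * ‖u n‖ ^ 2 ≤ ‖F 0‖ ^ 2 / (2 * ν) := by
      rw [le_div_iff₀ (by linarith : (0:ℝ) < 2 * ν)]
      nlinarith [sq_nonneg (ν * ‖u n‖ - ‖F 0‖)]
    linarith
  -- H ∘ u converges, hence ‖e n‖ → 0
  have hanti : Antitone fun n => H (u n) := by
    apply antitone_nat_of_succ_le
    intro n
    have h2 : 0 ≤ c * ‖e n‖ ^ 2 := mul_nonneg hc0.le (sq_nonneg _)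
    linarith [hdesc n]
  have hbdd : BddBelow (Set.range fun n => H (u n)) := by
    refine ⟨H 0 - ‖F 0‖ ^ 2 / (2 * ν), ?_⟩
    rintro x ⟨n, rfl⟩
    exact hlow2 n
  have hHconv : Tendsto (fun n => H (u n)) atTop (nhds (⨅ n, H (u n))) :=
    tendsto_atTop_ciInf hanti hbdd
  have hHdiff : Tendsto (fun n => H (u n) - H (u (n + 1))) atTop (nhds 0) := by
    have h2 : Tendsto (fun n => H (u (n + 1))) atTop (nhds (⨅ n, H (u n))) :=
      hHconv.comp (tendsto_add_atTop_nat 1)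
    have h3 := hHconv.sub h2
    rw [sub_self] at h3
    exact h3
  have hesq : Tendsto (fun n => ‖e n‖ ^ 2) atTop (nhds 0) := by
    have hsq : ∀ n, ‖e n‖ ^ 2 ≤ (1 / c) * (H (u n) - H (u (n + 1))) := by
      intro n
      have := hdesc n
      rw [mul_comm, ← div_eq_mul_one_div, le_div_iff₀ hc0]
      nlinarith
    have hlim : Tendsto (fun n => (1 / c) * (H (u n) - H (u (n + 1)))) atTop (nhds 0) := by
      simpa using hHdiff.const_mul (1 / c)
    exact squeeze_zero (fun n => by positivity) hsq hlim
  have heto : Tendsto (fun n => ‖e n‖) atTop (nhds 0) := by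
    have := (Real.continuous_sqrt.tendsto 0).comp hesq
    simp only [Function.comp_def] at this
    rw [Real.sqrt_zero] at this
    convert this using 2 with n
    rw [Real.sqrt_sq (norm_nonneg _)]
  -- Cauchy
  have hdist : ∀ n m, ‖u n - u m‖ ≤ K / ν * (‖e n‖ + ‖e m‖) := by
    intro n m
    rcases eq_or_lt_of_le (norm_nonneg (u n - u m)) with h0 | h0
    · rw [← h0]; positivity
    · have h1 := hmono (u n) (u m)
      have h2 := hFbound n (u n - u m)
      have h3 := hFbound m (u n - u m)
      have h4 : ν * ‖u n - u m‖ ^ 2 ≤ (K * ‖e n‖ + K * ‖e m‖) * ‖u n - u m‖ := by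
        have := (abs_le.mp h2).2
        have := (abs_le.mp h3).1
        nlinarith
      have h5 : ν * ‖u n - u m‖ ≤ K * ‖e n‖ + K * ‖e m‖ := by
        have := le_of_mul_le_mul_right (by nlinarith : ν * ‖u n - u m‖ * ‖u n - u m‖ ≤ (K * ‖e n‖ + K * ‖e m‖) * ‖u n - u m‖) h0
        linarith
      rw [div_mul_eq_mul_div, le_div_iff₀ hν]
      nlinarith
  have hcauchy : CauchySeq u := by
    rw [Metric.cauchySeq_iff]
    intro ε hε
    have hpos : (0:ℝ) < ν * ε / (4 * K) := by positivity
    obtain ⟨N, hN⟩ := (Metric.tendsto_atTop.mp heto) (ν * ε / (4 * K)) hpos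
    refine ⟨N, fun m hm n hn => ?_⟩
    have h1 : ‖e m‖ < ν * ε / (4 * K) := by
      have := hN m hm; rwa [Real.dist_eq, sub_zero, abs_of_nonneg (norm_nonneg _)] at this
    have h2 : ‖e n‖ < ν * ε / (4 * K) := by
      have := hN n hn; rwa [Real.dist_eq, sub_zero, abs_of_nonneg (norm_nonneg _)] at this
    rw [dist_eq_norm]
    calc ‖u m - u n‖ ≤ K / ν * (‖e m‖ + ‖e n‖) := hdist m n
      _ < K / ν * (ν * ε / (4 * K) + ν * ε / (4 * K)) := by
          apply mul_lt_mul_of_pos_left (by linarith) (by positivity)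
      _ = ε / 2 := by field_simp; ring
      _ < ε := by linarith
  obtain ⟨ustar, hconv⟩ := cauchySeq_tendsto_of_complete hcauchy
  have hFzero : ∀ v : X, F ustar v = 0 := by
    intro v
    have h1 : Tendsto (fun n => F (u n) v) atTop (nhds (F ustar v)) :=
      ((dn_lipCont F L hlip v).tendsto ustar).comp hconv
    have h2 : Tendsto (fun n => F (u n) v) atTop (nhds 0) := by
      apply squeeze_zero_norm (fun n => ?_) (by simpa using (heto.const_mul (K * ‖v‖)))
      have := hFbound n v
      rw [Real.norm_eq_abs]
      calc |F (u n) v| ≤ K * ‖e n‖ * ‖v‖ := this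
        _ = K * ‖v‖ * ‖e n‖ := by ring
    exact tendsto_nhds_unique h1 h2
  refine ⟨ustar, hconv, hFzero, fun w hw => ?_⟩
  have h := hmono w ustar
  rw [hw, hFzero] at h
  have : ‖w - ustar‖ ^ 2 ≤ 0 := by nlinarith
  have : ‖w - ustar‖ = 0 := by nlinarith [sq_nonneg ‖w - ustar‖, norm_nonneg (w - ustar)]
  exact sub_eq_zero.mp (norm_eq_zero.mp this)
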